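/- Let w = ∏_{i≥0} 0²1^{t_i+2}, where t_i is the Thue–Morse sequence. Then for every morphic involution g of {0,1}* (i.e., g induced by a permutation of {0,1} of order dividing 2), w contains no factor of the form x·x·g(x)·x with x nonempty. -/

import Mathlib

def tm (i : Nat) : Nat := (Nat.digits 2 i).sum % 2

/-- Block `0 0 1^(t_i+2)` of the word **w**. -/
def wBlock (i : Nat) : List Bool := [false, false] ++ List.replicate (tm i + 2) true

/-- Prefix of **w** made of the first `n` blocks. -/
def wPrefix (n : Nat) : List Bool := ((List.range n).map wBlock).flatten

/-- `L` is a factor of the infinite word **w**. -/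
def IsFactorW (L : List Bool) : Prop := ∃ n, L <:+: wPrefix n

lemma tm_lt (i : ℕ) : tm i < 2 := Nat.mod_lt _ (by norm_num)
lemma tm_even (i : ℕ) : tm (2*i) = tm i := by
  rcases Nat.eq_zero_or_pos i with h|h
  · simp [h, tm]
  · unfold tm
    rw [Nat.digits_def' (by norm_num : 1 < 2) (by omega)]
    have h1 : (2*i) % 2 = 0 := by omega
    have h2 : (2*i) / 2 = i := by omega
    rw [h1, h2, List.sum_cons, Nat.zero_add]
lemma tm_odd (i : ℕ) : tm (2*i+1) = 1 - tm i := by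
  unfold tm
  rw [Nat.digits_def' (by norm_num : 1 < 2) (by omega)]
  have h1 : (2*i+1) % 2 = 1 := by omega
  have h2 : (2*i+1) / 2 = i := by omega
  rw [h1, h2, List.sum_cons]
  have := Nat.mod_lt ((Nat.digits 2 i).sum) (show 0 < 2 by norm_num)
  omega
lemma tm_pair (m : ℕ) : tm (2*m) + tm (2*m+1) = 1 := by
  have h1 := tm_even m; have h2 := tm_odd m; have h3 := tm_lt m; omega

lemma sum_range_add' (f : ℕ → ℕ) (a b : ℕ) :
    ∑ j ∈ Finset.range (a+b), f j = (∑ j ∈ Finset.range a, f j) + ∑ j ∈ Finset.range b, f (a+j) := by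
  induction b with
  | zero => simp
  | succ b ih => rw [← Nat.add_assoc, Finset.sum_range_succ, Finset.sum_range_succ, ih]; ring

lemma tm_pair_sum (q e : ℕ) : (∑ j ∈ Finset.range (2*q), tm (2*e + j)) % 2 = q % 2 := by
  induction q with
  | zero => simp
  | succ q ih =>
      have h : 2*(q+1) = 2*q + 1 + 1 := by ring
      rw [h, Finset.sum_range_succ, Finset.sum_range_succ]
      have hp : tm (2*e + 2*q) + tm (2*e + (2*q+1)) = 1 := by
        rw [show 2*e + 2*q = 2*(e+q) from by ring,
            show 2*e + (2*q+1) = 2*(e+q)+1 from by ring]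
        exact tm_pair (e+q)
      omega

lemma tm_no_overlap : ∀ p, 0 < p → ∀ k, ¬ (∀ j, j ≤ p → tm (k+j) = tm (k+j+p)) := by
  intro p
  induction p using Nat.strong_induction_on with
  | _ p IH =>
    intro hp k h
    -- structural evaluation of the total sum
    set S1 := ∑ j ∈ Finset.range p, tm (k+j) with hS1
    have hstruct : ∑ j ∈ Finset.range (2*p+1), tm (k+j) = 2*S1 + tm (k+p) := by
      have e1 : 2*p+1 = p + (p+1) := by ring
      rw [e1, sum_range_add' (fun j => tm (k+j)) p (p+1)]
      have e2 : ∑ j ∈ Finset.range (p+1), tm (k+(p+j)) = ∑ j ∈ Finset.range (p+1), tm (k+j) := by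
        apply Finset.sum_congr rfl
        intro j hj
        have hj' : j ≤ p := by simpa using Finset.mem_range_succ_iff.mp hj
        have := h j hj'
        have e3 : k + (p+j) = k + j + p := by ring
        rw [e3, ← this]
      rw [e2, Finset.sum_range_succ]
      omega
    -- parity evaluation
    have hpar : p % 2 = 0 := by
      rcases Nat.even_or_odd k with ⟨e, he⟩ | ⟨e, he⟩
      · -- k = 2e
        have htot : (∑ j ∈ Finset.range (2*p+1), tm (k+j)) % 2 = (p + tm (k + 2*p)) % 2 := by
          rw [Finset.sum_range_succ]
          have := tm_pair_sum p e
          have he2 : ∀ j, k + j = 2*e + j := by intro j; omega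
          simp only [he2] at *
          omega
        have hkp : tm (k+p) = tm (k+2*p) := by
          have := h p (le_refl p); have e3 : k + p + p = k + 2*p := by ring
          rw [e3] at this; exact this
        have h1 := tm_lt (k+p)
        omega
      · -- k = 2e+1
        have htot : (∑ j ∈ Finset.range (2*p+1), tm (k+j)) % 2 = (p + tm k) % 2 := by
          rw [Finset.sum_range_succ']
          have := tm_pair_sum p (e+1)
          have he2 : ∀ j, k + (j+1) = 2*(e+1) + j := by intro j; omega
          simp only [he2]
          simp only [Nat.add_zero]
          omega
        have hk0 : tm k = tm (k+p) := by
          have := h 0 (Nat.zero_le p); simpa using this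
        have h1 := tm_lt (k+p)
        omega
    -- p = 2q, reduce
    obtain ⟨q, hq⟩ : ∃ q, p = 2*q := ⟨p/2, by omega⟩
    have hq1 : 0 < q := by omega
    apply IH q (by omega) hq1 (k/2)
    intro j hj
    rcases Nat.even_or_odd k with ⟨e, he⟩ | ⟨e, he⟩
    · have hk2 : k / 2 = e := by omega
      have h1 : tm (k + 2*j) = tm (k + 2*j + p) := h (2*j) (by omega)
      rw [show k + 2*j + p = 2*(e+j+q) from by omega,
          show k + 2*j = 2*(e+j) from by omega, tm_even, tm_even] at h1
      rw [hk2]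
      exact h1
    · have hk2 : k / 2 = e := by omega
      have h1 : tm (k + 2*j) = tm (k + 2*j + p) := h (2*j) (by omega)
      rw [show k + 2*j + p = 2*(e+j+q)+1 from by omega,
          show k + 2*j = 2*(e+j)+1 from by omega, tm_odd, tm_odd] at h1
      have l1 := tm_lt (e+j); have l2 := tm_lt (e+j+q)
      rw [hk2]
      omega


def S : ℕ → ℕ
  | 0 => 0
  | i+1 => S i + 4 + tm i

lemma S_succ (i : ℕ) : S (i+1) = S i + 4 + tm i := rfl
lemma S_zero : S 0 = 0 := rfl
lemma S_lt_succ (i : ℕ) : S i < S (i+1) := by rw [S_succ]; omega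
lemma S_succ_le (i : ℕ) : S (i+1) ≤ S i + 5 := by have := tm_lt i; rw [S_succ]; omega
lemma S_succ_ge (i : ℕ) : S i + 4 ≤ S (i+1) := by rw [S_succ]; omega
lemma S_mono : StrictMono S := strictMono_nat_of_lt_succ S_lt_succ
lemma S_add_ge (i k : ℕ) : S i + 4*k ≤ S (i+k) := by
  induction k with
  | zero => simp
  | succ k ih =>
      have h1 := S_succ_ge (i+k)
      have h2 : S (i + (k+1)) = S (i+k+1) := rfl
      omega
lemma S_ge (i : ℕ) : i ≤ S i := by have := S_add_ge 0 i; simp [S_zero] at this; omega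

def W (m : ℕ) : Bool := decide (∀ i ≤ m, m ≠ S i ∧ m ≠ S i + 1)

lemma W_false_iff (m : ℕ) : W m = false ↔ ∃ i, m = S i ∨ m = S i + 1 := by
  unfold W
  rw [decide_eq_false_iff_not]
  push_neg
  constructor
  · rintro ⟨i, -, h⟩
    exact ⟨i, by tauto⟩
  · rintro ⟨i, h⟩
    refine ⟨i, ?_, by tauto⟩
    have := S_ge i
    omega

lemma W_S (i : ℕ) : W (S i) = false := (W_false_iff _).2 ⟨i, Or.inl rfl⟩
lemma W_S1 (i : ℕ) : W (S i + 1) = false := (W_false_iff _).2 ⟨i, Or.inr rfl⟩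

lemma W_true_of (i m : ℕ) (h1 : S i + 2 ≤ m) (h2 : m < S (i+1)) : W m = true := by
  rw [← Bool.not_eq_false, W_false_iff]
  push_neg
  intro j
  rcases le_or_gt j i with hj | hj
  · have := S_mono.le_iff_le.2 hj
    omega
  · have : S (i+1) ≤ S j := S_mono.le_iff_le.2 hj
    omega

lemma block_exists (m : ℕ) : ∃ i, S i ≤ m ∧ m < S (i+1) := by
  induction m with
  | zero => exact ⟨0, by simp [S_zero], by have := S_lt_succ 0; omega⟩
  | succ m ih =>
      obtain ⟨i, h1, h2⟩ := ih
      rcases Nat.lt_or_ge (m+1) (S (i+1)) with h | h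
      · exact ⟨i, by omega, h⟩
      · exact ⟨i+1, by omega, by have := S_lt_succ (i+1); omega⟩

lemma zz_start (m : ℕ) (h0 : W m = false) (h1 : W (m+1) = false) : ∃ i, m = S i := by
  obtain ⟨i, hi | hi⟩ := (W_false_iff m).1 h0
  · exact ⟨i, hi⟩
  · exfalso
    have : W (m+1) = true := W_true_of i (m+1) (by omega) (by have := S_succ_ge i; omega)
    rw [this] at h1
    exact absurd h1 (by simp)

lemma tz_start (m : ℕ) (h0 : W m = true) (h1 : W (m+1) = false) : ∃ i, m + 1 = S i := by
  obtain ⟨i, hi | hi⟩ := (W_false_iff (m+1)).1 h1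
  · exact ⟨i, hi⟩
  · exfalso
    have hm : m = S i := by omega
    rw [hm, W_S i] at h0
    exact absurd h0 (by simp)

lemma W_before (i : ℕ) (h : 1 ≤ S i) : W (S i - 1) = true := by
  cases i with
  | zero => simp [S_zero] at h
  | succ j =>
      apply W_true_of j
      · have := S_succ j; omega
      · have := S_succ j; omega

lemma S_lt_iff {a b : ℕ} : S a < S b ↔ a < b := S_mono.lt_iff_lt

-- blocks as ranges
lemma wBlock_eq (i : ℕ) : wBlock i = (List.range' (S i) (4 + tm i)).map W := by
  unfold wBlock
  rw [show (4 + tm i) = (tm i + 2) + 1 + 1 from by omega, List.range'_succ, List.range'_succ,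
      List.map_cons, List.map_cons, W_S i, show S i + 1 + 1 = S i + 2 from rfl, W_S1 i]
  have : List.map W (List.range' (S i + 2) (tm i + 2)) = List.replicate (tm i + 2) true := by
    rw [List.eq_replicate_iff]
    refine ⟨by simp, ?_⟩
    intro b hb
    rw [List.mem_map] at hb
    obtain ⟨m, hm, rfl⟩ := hb
    rw [List.mem_range'_1] at hm
    apply W_true_of i
    · omega
    · rw [S_succ]; omega
  rw [this]
  rfl

lemma blocks_eq : ∀ (K i : ℕ),
    ((List.range' i K).map wBlock).flatten = (List.range' (S i) (S (i+K) - S i)).map W := by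
  intro K
  induction K with
  | zero => intro i; simp
  | succ K ih =>
      intro i
      rw [List.range'_succ, List.map_cons, List.flatten_cons, ih (i+1), wBlock_eq i,
          ← List.map_append]
      have h1 : S i < S (i+1) := S_lt_succ i
      have h2 : S (i+1) ≤ S (i+1+K) := S_mono.le_iff_le.2 (by omega)
      have h3 : S (i+1) = S i + (4 + tm i) := by rw [S_succ i]; omega
      have h4 : S (i + (K+1)) = S (i+1+K) := by congr 1; omega
      rw [h3, List.range'_append_1]
      have h5 : (4 + tm i) + (S (i+1+K) - (S i + (4 + tm i))) = S (i+(K+1)) - S i := by omega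
      rw [h5]

lemma wPrefix_eq (n : ℕ) : wPrefix n = (List.range (S n)).map W := by
  have h := blocks_eq n 0
  rw [List.range_eq_range']
  unfold wPrefix
  rw [List.range_eq_range']
  simpa [S_zero] using h

lemma wPrefix_length (n : ℕ) : (wPrefix n).length = S n := by
  rw [wPrefix_eq]; simp

lemma factor_pos (u : List Bool) (h : IsFactorW u) :
    ∃ s, ∀ j < u.length, u.getD j false = W (s + j) := by
  obtain ⟨N, l, r, hlr⟩ := h
  refine ⟨l.length, ?_⟩
  intro j hj
  have h1 : (wPrefix N).getD (l.length + j) false = u.getD j false := by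
    rw [← hlr]
    rw [List.getD_append _ _ _ _ (by simp; omega)]
    rw [List.getD_append_right _ _ _ _ (by omega)]
    simp
  rw [← h1, wPrefix_eq]
  have hlen : l.length + j < S N := by
    have := congrArg List.length hlr
    simp [wPrefix_length] at this
    omega
  rw [List.getD_eq_getElem _ _ (by simpa using hlen)]
  simp


section IdLarge
variable (s n : ℕ)

lemma start_near (c : ℕ) : ∃ i, c ≤ S i ∧ S i ≤ c + 4 := by
  obtain ⟨i, h1, h2⟩ := block_exists c
  rcases eq_or_lt_of_le h1 with h | h
  · exact ⟨i, by omega, by omega⟩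
  · exact ⟨i+1, by omega, by have := S_succ_le i; omega⟩

variable (hshift : ∀ m, s ≤ m → m + n < s + 4*n → W m = W (m+n))

include hshift in
lemma stepP (i : ℕ) (hl : s ≤ S i) (hr : S i + 1 + n < s + 4*n) :
    ∃ i', S i' = S i + n := by
  have e0 : W (S i + n) = false := by
    rw [← hshift (S i) hl (by omega), W_S]
  have e1 : W (S i + 1 + n) = false := by
    rw [← hshift (S i + 1) (by omega) hr, W_S1]
  obtain ⟨i', hi'⟩ := zz_start (S i + n) e0 (by rw [show S i + n + 1 = S i + 1 + n from by omega]; exact e1)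
  exact ⟨i', hi'.symm⟩

include hshift in
lemma stepP' (i : ℕ) (hl : s + 1 ≤ S i) (hr : S i + n < s + 4*n) :
    ∃ i', S i' = S i + n := by
  have h1 : 1 ≤ S i := by omega
  have e0 : W (S i - 1 + n) = true := by
    rw [← hshift (S i - 1) (by omega) (by omega), W_before i h1]
  have e1 : W (S i - 1 + n + 1) = false := by
    rw [show S i - 1 + n + 1 = S i + n from by omega,
        ← hshift (S i) (by omega) (by omega), W_S]
  obtain ⟨i', hi'⟩ := tz_start _ e0 e1
  exact ⟨i', by omega⟩

include hshift in
lemma succ_of_start (i i' : ℕ) (hii' : S i' = S i + n) (hl : s ≤ S i)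
    (hr : S (i+1) + n < s + 4*n) :
    S (i'+1) = S (i+1) + n ∧ tm i' = tm i := by
  obtain ⟨i'', hi''⟩ := stepP' s n hshift (i+1) (by have := S_lt_succ i; omega) hr
  have hgap1 : S (i+1) ≤ S i + 5 := S_succ_le i
  have hgap2 : S i + 4 ≤ S (i+1) := S_succ_ge i
  have hlt : S i' < S i'' := by omega
  have hii : i' < i'' := S_lt_iff.1 hlt
  have heq : i'' = i' + 1 := by
    by_contra hne
    have h2 : i' + 2 ≤ i'' := by omega
    have := S_add_ge (i'+2) (i''-(i'+2))
    have e2 : i' + 2 + (i'' - (i'+2)) = i'' := by omega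
    rw [e2] at this
    have h3 := S_add_ge i' 2
    have h4 := S_succ_ge i'
    have h5 := S_succ_ge (i'+1)
    have : S (i'+2) ≥ S i' + 8 := by
      have := S_add_ge i' 2; omega
    omega
  rw [heq] at hi''
  constructor
  · omega
  · have e1 : S (i'+1) = S i' + 4 + tm i' := S_succ i'
    have e2 : S (i+1) = S i + 4 + tm i := S_succ i
    omega

include hshift in
lemma id_large_aux (hn : 5 ≤ n) (hs4 : True) : False := by
  obtain ⟨i0, hi0l, hi0r⟩ := start_near s
  obtain ⟨i1, hi1⟩ := stepP s n hshift i0 hi0l (by omega)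
  have hlt : i0 < i1 := S_lt_iff.1 (by omega)
  set p := i1 - i0 with hp
  have hp0 : 0 < p := by omega
  have hi1p : i1 = i0 + p := by omega
  -- main induction
  have main : ∀ j, j ≤ p → S (i0 + j + p) = S (i0 + j) + n ∧ (j < p → tm (i0+j) = tm (i0+j+p)) := by
    intro j
    induction j with
    | zero =>
        intro _
        constructor
        · rw [show i0 + 0 + p = i1 from by omega, show i0 + 0 = i0 from by omega]; exact hi1
        · intro hj
          have hS : S (i0+1) ≤ S i1 := S_mono.le_iff_le.2 (by omega)
          have h := succ_of_start s n hshift i0 (i0+p) (by rw [← hi1p]; exact hi1) hi0l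
            (by omega)
          exact h.2.symm
    | succ j ih =>
        intro hj
        have ihh := ih (by omega)
        have hSj1 : S (i0 + j + 1) ≤ S i1 := S_mono.le_iff_le.2 (by omega)
        have hSi1 : S i1 = S i0 + n := hi1
        have hle0 : S i0 ≤ S (i0+j) := S_mono.le_iff_le.2 (by omega)
        have hSj1' : S (i0 + j + 1) ≤ S i0 + n := by rw [hi1] at hSj1; omega
        have h := succ_of_start s n hshift (i0+j) (i0+j+p) ihh.1
          (by omega) (by omega)
        constructor
        · rw [show i0 + (j+1) + p = i0 + j + p + 1 from by omega,
              show i0 + (j+1) = i0 + j + 1 from by omega]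
          exact h.1
        · intro hjp
          -- tm (i0+(j+1)) = tm (i0+(j+1)+p)
          have hSj2 : S (i0 + (j+1) + 1) ≤ S i0 + n := by
            have := S_mono.le_iff_le.2 (show i0 + (j+1) + 1 ≤ i1 from by omega)
            rw [hi1] at this; omega
          have h2 := succ_of_start s n hshift (i0+(j+1)) (i0+(j+1)+p)
            (by rw [show i0+(j+1)+p = i0+j+p+1 from by omega, show i0+(j+1) = i0+j+1 from by omega]; exact h.1)
            (by have : S i0 ≤ S (i0+(j+1)) := S_mono.le_iff_le.2 (by omega); omega)
            (by omega)
          exact h2.2.symm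
  -- final step for j = p
  have hC1 : S (i0 + 1 + p) = S (i0 + 1) + n := by
    have := (main 1 (by omega)).1
    rw [show i0 + 1 + p = i0 + 1 + p from rfl]
    rw [show i0 + 1 = i0 + 1 from rfl] at this
    exact this
  have hCp : S (i0 + p + p) = S (i0 + p) + n := (main p (le_refl p)).1
  have hlast : tm (i0 + p) = tm (i0 + p + p) := by
    have hS1 : S (i0+1) ≤ S i0 + 5 := S_succ_le i0
    have h := succ_of_start s n hshift (i0+p) (i0+p+p) hCp
      (by have : S i0 ≤ S (i0+p) := S_mono.le_iff_le.2 (by omega); omega)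
      (by rw [show i0 + p + 1 = i0 + 1 + p from by omega, hC1]; omega)
    exact h.2.symm
  apply tm_no_overlap p hp0 i0
  intro j hj
  rcases eq_or_lt_of_le hj with heq | hjlt
  · rw [heq]; exact hlast
  · exact (main j (by omega)).2 (by omega)

end IdLarge

section CompLarge
variable (s n : ℕ)
variable (hanti : ∀ m, s + n ≤ m → m + n < s + 4*n → W (m+n) = !(W m))

include hanti in
lemma dom1 (b : ℕ) (hl : s + n ≤ S b + 2) (hr : S b + 4 + n < s + 4*n) : tm b = 0 := by
  by_contra h
  have htb : tm b = 1 := by have := tm_lt b; omega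
  have hS1 : S (b+1) = S b + 5 := by rw [S_succ, htb]
  have ht2 : W (S b + 2) = true := W_true_of b _ (by omega) (by omega)
  have ht3 : W (S b + 3) = true := W_true_of b _ (by omega) (by omega)
  have ht4 : W (S b + 4) = true := W_true_of b _ (by omega) (by omega)
  have hz0 : W (S b + 2 + n) = false := by rw [hanti _ (by omega) (by omega), ht2]; rfl
  have hz1 : W (S b + 3 + n) = false := by rw [hanti _ (by omega) (by omega), ht3]; rfl
  have hz2 : W (S b + 4 + n) = false := by rw [hanti _ (by omega) (by omega), ht4]; rfl
  obtain ⟨j, hj⟩ := zz_start (S b + 2 + n) hz0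
    (by rw [show S b + 2 + n + 1 = S b + 3 + n from by omega]; exact hz1)
  have : W (S j + 2) = true := W_true_of j _ (by omega) (by have := S_succ_ge j; omega)
  rw [show S j + 2 = S b + 4 + n from by omega] at this
  rw [this] at hz2
  exact absurd hz2 (by simp)

include hanti in
lemma dom2 (b : ℕ) (hl : s + 2*n ≤ S b + 2) (hr : S b + 4 < s + 4*n) : tm b = 0 := by
  by_contra h
  have htb : tm b = 1 := by have := tm_lt b; omega
  have hS1 : S (b+1) = S b + 5 := by rw [S_succ, htb]
  have ht2 : W (S b + 2) = true := W_true_of b _ (by omega) (by omega)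
  have ht3 : W (S b + 3) = true := W_true_of b _ (by omega) (by omega)
  have ht4 : W (S b + 4) = true := W_true_of b _ (by omega) (by omega)
  have hz0 : W (S b + 2 - n) = false := by
    have := hanti (S b + 2 - n) (by omega) (by omega)
    rw [show S b + 2 - n + n = S b + 2 from by omega, ht2] at this
    cases hW : W (S b + 2 - n) <;> simp [hW] at this ⊢
  have hz1 : W (S b + 3 - n) = false := by
    have := hanti (S b + 3 - n) (by omega) (by omega)
    rw [show S b + 3 - n + n = S b + 3 from by omega, ht3] at this
    cases hW : W (S b + 3 - n) <;> simp [hW] at this ⊢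
  have hz2 : W (S b + 4 - n) = false := by
    have := hanti (S b + 4 - n) (by omega) (by omega)
    rw [show S b + 4 - n + n = S b + 4 from by omega, ht4] at this
    cases hW : W (S b + 4 - n) <;> simp [hW] at this ⊢
  obtain ⟨j, hj⟩ := zz_start (S b + 2 - n) hz0
    (by rw [show S b + 2 - n + 1 = S b + 3 - n from by omega]; exact hz1)
  have : W (S j + 2) = true := W_true_of j _ (by omega) (by have := S_succ_ge j; omega)
  rw [show S j + 2 = S b + 4 - n from by omega] at this
  rw [this] at hz2
  exact absurd hz2 (by simp)

include hanti in
lemma comp_large (hn : 6 ≤ n) : False := by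
  obtain ⟨j0, hj0l, hj0r⟩ := block_exists (s + n)
  -- find i1 with s+n ≤ S i1 + 2 and S i1 ≤ s+n+2
  obtain ⟨i1, hi1l, hi1r⟩ : ∃ i1, s + n ≤ S i1 + 2 ∧ S i1 ≤ s + n + 2 := by
    rcases le_or_gt (s+n) (S j0 + 2) with h | h
    · exact ⟨j0, h, by omega⟩
    · refine ⟨j0+1, by have := S_succ_ge j0; omega, by have := S_succ_le j0; omega⟩
  have key : ∀ b, S b ≤ s + n + 12 → s + n ≤ S b + 2 → tm b = 0 := by
    intro b h1 h2
    rcases Nat.lt_or_ge (S b + 4 + n) (s + 4*n) with h | h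
    · exact dom1 s n hanti b h2 h
    · apply dom2 s n hanti b (by omega) (by omega)
  have hb0 : tm i1 = 0 := key i1 (by omega) hi1l
  have hS1 : S (i1+1) = S i1 + 4 := by rw [S_succ, hb0]
  have hb1 : tm (i1+1) = 0 := key (i1+1) (by omega) (by omega)
  have hS2 : S (i1+2) = S i1 + 8 := by rw [show i1+2 = (i1+1)+1 from rfl, S_succ, hb1, hS1]
  have hb2 : tm (i1+2) = 0 := key (i1+2) (by omega) (by omega)
  apply tm_no_overlap 1 (by omega) i1
  intro j hj
  interval_cases j
  · rw [show i1 + 0 = i1 from by omega, show i1 + 0 + 1 = i1 + 1 from by omega, hb0, hb1]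
  · rw [show i1 + 1 + 1 = i1 + 2 from rfl, hb1, hb2]

end CompLarge

section Small

def blkL (t : ℕ) : List Bool := [false, false] ++ List.replicate (t+2) true
def rend (ts : List ℕ) : List Bool := (ts.map blkL).flatten

def noTriple (ts : List ℕ) : Bool :=
  (List.range ts.length).all fun m =>
    !(decide (m + 2 < ts.length) && decide (ts.getD m 0 = ts.getD (m+1) 0)
      && decide (ts.getD (m+1) 0 = ts.getD (m+2) 0))

def patOK (cpl : Bool) (n : ℕ) (v : List Bool) : Bool :=
  (List.range (v.length + 1)).all fun d =>
    !(decide (d + 4*n ≤ v.length)) ||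
    !((List.range n).all fun j =>
       (v.getD (d+n+j) false == v.getD (d+j) false) &&
       (v.getD (d+2*n+j) false == (if cpl then !(v.getD (d+j) false) else v.getD (d+j) false)) &&
       (v.getD (d+3*n+j) false == v.getD (d+j) false))

def allB : ℕ → (List ℕ → Bool) → Bool
  | 0, P => P []
  | (K+1), P => allB K (fun l => P (0 :: l)) && allB K (fun l => P (1 :: l))

lemma allB_spec : ∀ K (P : List ℕ → Bool), allB K P = true →
    ∀ ts : List ℕ, ts.length = K → (∀ t ∈ ts, t < 2) → P ts = true := by
  intro K
  induction K with
  | zero =>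
      intro P h ts hlen _
      rw [List.length_eq_zero_iff] at hlen
      rw [hlen]; exact h
  | succ K ih =>
      intro P h ts hlen hmem
      rcases ts with _ | ⟨t, ts'⟩
      · simp at hlen
      · simp only [allB, Bool.and_eq_true] at h
        have hlen' : ts'.length = K := by simpa using hlen
        have hmem' : ∀ u ∈ ts', u < 2 := fun u hu => hmem u (by simp [hu])
        have ht : t < 2 := hmem t (by simp)
        interval_cases t
        · exact ih _ h.1 ts' hlen' hmem'
        · exact ih _ h.2 ts' hlen' hmem'

lemma small_case (cpl : Bool) (n s : ℕ) (hn : 1 ≤ n)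
    (hchk : allB (n+1) (fun ts => !(noTriple ts) || patOK cpl n (rend ts)) = true)
    (h1 : ∀ j < n, W (s+n+j) = W (s+j))
    (h2 : ∀ j < n, W (s+2*n+j) = (if cpl then !(W (s+j)) else W (s+j)))
    (h3 : ∀ j < n, W (s+3*n+j) = W (s+j)) : False := by
  obtain ⟨i, hil, hir⟩ := block_exists s
  set K := n + 1 with hK
  set ts := (List.range K).map (fun j => tm (i+j)) with hts
  have hlen : ts.length = K := by simp [hts]
  have hmem : ∀ t ∈ ts, t < 2 := by
    intro t ht
    simp [hts] at ht
    obtain ⟨j, -, rfl⟩ := ht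
    exact tm_lt _
  have htsget : ∀ m, m < K → ts.getD m 0 = tm (i+m) := by
    intro m hm
    rw [hts, List.getD_eq_getElem _ _ (by simpa using hm)]
    simp
  -- v = map W (range' (S i) M)
  have hv : rend ts = (List.range' (S i) (S (i+K) - S i)).map W := by
    rw [← blocks_eq K i, hts]
    unfold rend
    rw [List.map_map, List.range'_eq_map_range]
    rw [List.map_map]
    rfl
  have hvlen : (rend ts).length = S (i+K) - S i := by rw [hv]; simp
  have hcover : s + 4*n ≤ S (i+K) := by
    have h1 := S_add_ge (i+1) n
    have h2 : i + 1 + n = i + K := by omega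
    rw [h2] at h1
    have := S_lt_succ i
    omega
  have hgetD : ∀ t, t < 4*n → (rend ts).getD (s - S i + t) false = W (s + t) := by
    intro t ht
    have hbound : s - S i + t < S (i+K) - S i := by omega
    rw [hv, List.getD_eq_getElem _ _ (by simpa using hbound)]
    simp only [List.getElem_map, List.getElem_range']
    congr 1
    omega
  -- noTriple ts = true
  have hnt : noTriple ts = true := by
    unfold noTriple
    rw [List.all_eq_true]
    intro m hm
    rw [List.mem_range] at hm
    by_contra hc
    simp only [Bool.not_eq_true', Bool.not_eq_false, Bool.and_eq_true, decide_eq_true_eq] at hc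
    obtain ⟨⟨hm2, he1⟩, he2⟩ := hc
    rw [hlen] at hm2
    rw [htsget m (by omega), htsget (m+1) (by omega)] at he1
    rw [htsget (m+1) (by omega), htsget (m+2) (by omega)] at he2
    apply tm_no_overlap 1 (by omega) (i+m)
    intro j hj
    interval_cases j
    · rw [show i+m+0 = i+m from by omega, show i+m+0+1 = i+(m+1) from by omega]; exact he1
    · rw [show i+m+1 = i+(m+1) from by omega, show i+(m+1)+1 = i+(m+2) from by omega]; exact he2
  -- get patOK
  have hP := allB_spec (n+1) _ hchk ts (by omega) hmem
  rw [hnt] at hP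
  simp only [Bool.not_true, Bool.false_or] at hP
  -- evaluate patOK at d
  set d := s - S i with hd
  have hdbound : d + 4*n ≤ (rend ts).length := by rw [hvlen]; omega
  have hPd := (List.all_eq_true.mp hP) d (by rw [List.mem_range]; omega)
  simp only [Bool.or_eq_true, Bool.not_eq_true', decide_eq_false_iff_not] at hPd
  rcases hPd with hPd | hPd
  · exact hPd hdbound
  · obtain ⟨j, hjmem', hj⟩ := List.all_eq_false.mp hPd
    have hjmem : j < n := List.mem_range.mp hjmem'
    apply absurd hj
    simp only [Bool.not_eq_false, Bool.and_eq_true, beq_iff_eq]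
    have e0 : (rend ts).getD (d+j) false = W (s+j) := hgetD j (by omega)
    have e1 : (rend ts).getD (d+n+j) false = W (s+n+j) := by
      rw [show d+n+j = d+(n+j) from by omega, hgetD (n+j) (by omega)]
      rw [show s+(n+j) = s+n+j from by omega]
    have e2 : (rend ts).getD (d+2*n+j) false = W (s+2*n+j) := by
      rw [show d+2*n+j = d+(2*n+j) from by omega, hgetD (2*n+j) (by omega)]
      rw [show s+(2*n+j) = s+2*n+j from by omega]
    have e3 : (rend ts).getD (d+3*n+j) false = W (s+3*n+j) := by
      rw [show d+3*n+j = d+(3*n+j) from by omega, hgetD (3*n+j) (by omega)]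
      rw [show s+(3*n+j) = s+3*n+j from by omega]
    intro hno
    apply hno
    refine ⟨⟨?_, ?_⟩, ?_⟩
    · rw [e0, e1]; exact h1 j hjmem
    · rw [e0, e2]
      rcases cpl with _ | _
      · simpa using h2 j hjmem
      · simpa using h2 j hjmem
    · rw [e0, e3]; exact h3 j hjmem

end Small

section Checks
set_option maxRecDepth 100000

lemma chk_id1 : allB 2 (fun ts => !(noTriple ts) || patOK false 1 (rend ts)) = true := by decide
lemma chk_id2 : allB 3 (fun ts => !(noTriple ts) || patOK false 2 (rend ts)) = true := by decide
lemma chk_id3 : allB 4 (fun ts => !(noTriple ts) || patOK false 3 (rend ts)) = true := by decide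
lemma chk_id4 : allB 5 (fun ts => !(noTriple ts) || patOK false 4 (rend ts)) = true := by decide
lemma chk_comp1 : allB 2 (fun ts => !(noTriple ts) || patOK true 1 (rend ts)) = true := by decide
lemma chk_comp2 : allB 3 (fun ts => !(noTriple ts) || patOK true 2 (rend ts)) = true := by decide
lemma chk_comp3 : allB 4 (fun ts => !(noTriple ts) || patOK true 3 (rend ts)) = true := by decide
lemma chk_comp4 : allB 5 (fun ts => !(noTriple ts) || patOK true 4 (rend ts)) = true := by decide
lemma chk_comp5 : allB 6 (fun ts => !(noTriple ts) || patOK true 5 (rend ts)) = true := by decide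

end Checks

lemma mk_hshift (s n : ℕ)
    (h1 : ∀ j < n, W (s+n+j) = W (s+j))
    (h2 : ∀ j < n, W (s+2*n+j) = W (s+j))
    (h3 : ∀ j < n, W (s+3*n+j) = W (s+j)) :
    ∀ m, s ≤ m → m + n < s + 4*n → W m = W (m+n) := by
  intro m hm hm2
  set j := m - s with hj
  have hmj : m = s + j := by omega
  rcases Nat.lt_or_ge j n with hc | hc
  · rw [show m + n = s+n+j from by omega, show m = s + j from by omega]
    exact (h1 j hc).symm
  rcases Nat.lt_or_ge j (2*n) with hc2 | hc2
  · rw [show m + n = s+2*n+(j-n) from by omega, show m = s+n+(j-n) from by omega,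
        h1 (j-n) (by omega), h2 (j-n) (by omega)]
  · rw [show m + n = s+3*n+(j-2*n) from by omega, show m = s+2*n+(j-2*n) from by omega,
        h2 (j-2*n) (by omega), h3 (j-2*n) (by omega)]

lemma mk_hanti (s n : ℕ)
    (h1 : ∀ j < n, W (s+n+j) = W (s+j))
    (h2 : ∀ j < n, W (s+2*n+j) = !(W (s+j)))
    (h3 : ∀ j < n, W (s+3*n+j) = W (s+j)) :
    ∀ m, s + n ≤ m → m + n < s + 4*n → W (m+n) = !(W m) := by
  intro m hm hm2
  set j := m - s with hj
  rcases Nat.lt_or_ge j (2*n) with hc | hc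
  · rw [show m + n = s+2*n+(j-n) from by omega, show m = s+n+(j-n) from by omega,
        h1 (j-n) (by omega), h2 (j-n) (by omega)]
  · rw [show m + n = s+3*n+(j-2*n) from by omega, show m = s+2*n+(j-2*n) from by omega,
        h2 (j-2*n) (by omega), h3 (j-2*n) (by omega), Bool.not_not]

theorem stmt8 (x : List Bool) (hx : x ≠ []) (g : List Bool → List Bool)
    (hg : (∀ l, g l = l) ∨ (∀ l, g l = l.map (fun b => !b))) :
    ¬ IsFactorW (x ++ x ++ g x ++ x) := by
  intro hf
  set n := x.length with hn
  have hn1 : 1 ≤ n := by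
    rw [hn]
    exact List.length_pos_iff.mpr hx
  have hglen : (g x).length = n := by rcases hg with h | h <;> simp [h x, hn]
  have hulen : (x ++ x ++ g x ++ x).length = 4*n := by
    simp only [List.length_append, hglen, ← hn]
    omega
  obtain ⟨s, hW⟩ := factor_pos _ hf
  rw [hulen] at hW
  -- components
  have hlen2 : (x ++ x).length = 2*n := by simp [← hn]; omega
  have hlen3 : ((x ++ x) ++ g x).length = 3*n := by simp [← hn, hglen]; omega
  have hA : ∀ j < n, x.getD j false = W (s + j) := by
    intro j hj
    have h := hW j (by omega)
    rw [List.getD_append _ _ _ _ (by omega),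
        List.getD_append _ _ _ _ (by omega),
        List.getD_append _ _ _ _ (by omega)] at h
    exact h
  have hB : ∀ j < n, x.getD j false = W (s + n + j) := by
    intro j hj
    have h := hW (n+j) (by omega)
    rw [List.getD_append _ _ _ _ (by omega),
        List.getD_append _ _ _ _ (by omega),
        List.getD_append_right _ _ _ _ (by omega),
        show n + j - x.length = j from by omega,
        show s + (n+j) = s + n + j from by omega] at h
    exact h
  have hC : ∀ j < n, (g x).getD j false = W (s + 2*n + j) := by
    intro j hj
    have h := hW (2*n+j) (by omega)
    rw [List.getD_append _ _ _ _ (by omega),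
        List.getD_append_right _ _ _ _ (by omega),
        show 2*n + j - (x ++ x).length = j from by omega,
        show s + (2*n+j) = s + 2*n + j from by omega] at h
    exact h
  have hD : ∀ j < n, x.getD j false = W (s + 3*n + j) := by
    intro j hj
    have h := hW (3*n+j) (by omega)
    rw [List.getD_append_right _ _ _ _ (by omega),
        show 3*n + j - ((x ++ x) ++ g x).length = j from by omega,
        show s + (3*n+j) = s + 3*n + j from by omega] at h
    exact h
  have h1 : ∀ j < n, W (s+n+j) = W (s+j) := by
    intro j hj; rw [← hA j hj, ← hB j hj]
  have h3 : ∀ j < n, W (s+3*n+j) = W (s+j) := by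
    intro j hj; rw [← hA j hj, ← hD j hj]
  rcases hg with hgid | hgc
  · -- identity case
    have h2 : ∀ j < n, W (s+2*n+j) = W (s+j) := by
      intro j hj
      rw [← hA j hj, ← hC j hj, hgid x]
    rcases Nat.lt_or_ge n 5 with hsmall | hlarge
    · have h2' : ∀ j < n, W (s+2*n+j) = (if (false : Bool) then !(W (s+j)) else W (s+j)) := by
        simpa using h2
      interval_cases n
      · exact small_case false 1 s (by omega) chk_id1 h1 h2' h3
      · exact small_case false 2 s (by omega) chk_id2 h1 h2' h3
      · exact small_case false 3 s (by omega) chk_id3 h1 h2' h3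
      · exact small_case false 4 s (by omega) chk_id4 h1 h2' h3
    · exact id_large_aux s n (mk_hshift s n h1 h2 h3) hlarge trivial
  · -- complement case
    have h2 : ∀ j < n, W (s+2*n+j) = !(W (s+j)) := by
      intro j hj
      rw [← hA j hj, ← hC j hj, hgc x]
      rw [List.getD_eq_getElem _ _ (by simp [← hn]; omega),
          List.getD_eq_getElem _ _ (by omega)]
      simp
    rcases Nat.lt_or_ge n 6 with hsmall | hlarge
    · have h2' : ∀ j < n, W (s+2*n+j) = (if (true : Bool) then !(W (s+j)) else W (s+j)) := by
        simpa using h2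
      interval_cases n
      · exact small_case true 1 s (by omega) chk_comp1 h1 h2' h3
      · exact small_case true 2 s (by omega) chk_comp2 h1 h2' h3
      · exact small_case true 3 s (by omega) chk_comp3 h1 h2' h3
      · exact small_case true 4 s (by omega) chk_comp4 h1 h2' h3
      · exact small_case true 5 s (by omega) chk_comp5 h1 h2' h3
    · exact comp_large s n (mk_hanti s n h1 h2 h3) hlarge
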